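/- arXiv:2301.02644 — 2 statements merged into one kernel-verified Lean document; each statement's English description precedes it below -/
import Mathlib

section
/- Let k be a commutative ring, d ≥ 0, n ≥ 0. Let F : k[a_1,…,a_{d+1}, b_1,…,b_{d+1}, γ_1,…,γ_n] → k[a_1,…,a_d, b_1,…,b_d, c, γ_1,…,γ_n] be the k-algebra homomorphism with F(a_i) = a_{i−1} − c·a_i and F(b_i) = b_{i−1} − c·b_i for 1 ≤ i ≤ d+1 (conventions a_0 = b_0 = b_{d+1} = 0 and a_{d+1} = 1 in the target, so F(a_1) = −c·a_1, F(a_{d+1}) = a_d − c, F(b_1) = −c·b_1, F(b_{d+1}) = b_d) and F(γ_j) = γ_j. Then F(W_{d+1,n}) = W_{d,n} (the latter viewed in the target ring). -/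
open MvPolynomial

/-- The power series `1 + a_d z + a_{d-1} z^2 + ⋯ + a_1 z^d`, where the variable
`X m : MvPolynomial (Fin d) k` represents `a_{m+1}`. -/
noncomputable def Pser (k : Type) [CommRing k] (d : ℕ) :
    PowerSeries (MvPolynomial (Fin d) k) :=
  1 + ∑ m : Fin d, PowerSeries.monomial (d - (m : ℕ)) (X m)

/-- `vcoef k d i` is `v_{i,d}`, the `i`-th coefficient of the inverse of the
power series `1 + a_d z + ⋯ + a_1 z^d`. -/
noncomputable def vcoef (k : Type) [CommRing k] (d : ℕ) (i : ℕ) :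
    MvPolynomial (Fin d) k :=
  PowerSeries.coeff i ((Pser k d).invOfUnit 1)

/-- The type of variables `a_1, …, a_d, b_1, …, b_d, γ_1, …, γ_n`:
`Sum.inl (Sum.inl p)` is `a_{p+1}`, `Sum.inl (Sum.inr p)` is `b_{p+1}`,
`Sum.inr q` is `γ_{q+1}`. -/
abbrev WVar (d n : ℕ) : Type := (Fin d ⊕ Fin d) ⊕ Fin n

/-- `v_{i,d}` viewed in `k[a,b,γ]`. -/
noncomputable def va (k : Type) [CommRing k] (d n : ℕ) (i : ℕ) :
    MvPolynomial (WVar d n) k :=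
  rename (fun m => Sum.inl (Sum.inl m)) (vcoef k d i)

/-- `γ_{i+1}`, with the convention `γ_{n+1} = 1`. -/
noncomputable def gamW (k : Type) [CommRing k] (d n : ℕ) (i : ℕ) :
    MvPolynomial (WVar d n) k :=
  if h : i < n then X (Sum.inr (⟨i, h⟩ : Fin n)) else 1

/-- `W_{d,n} = ∑_{i=0}^n γ_{i+1} (b_d v_{i,d} + b_{d-1} v_{i-1,d} + ⋯ + b_1 v_{i-d+1,d})`,
where terms `v_{i,d}` with `i < 0` are omitted (they are zero). -/
noncomputable def Wpoly (k : Type) [CommRing k] (d n : ℕ) :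
    MvPolynomial (WVar d n) k :=
  ∑ i ∈ Finset.range (n + 1), gamW k d n i *
    ∑ j : Fin d,
      if d - 1 - (j : ℕ) ≤ i then
        X (Sum.inl (Sum.inr j)) * va k d n (i - (d - 1 - (j : ℕ)))
      else 0

/-- Variables of the target ring `k[a_1,…,a_d, b_1,…,b_d, c, γ_1,…,γ_n]`:
`Sum.inl (Sum.inl (Sum.inl p))` is `a_{p+1}`, `Sum.inl (Sum.inl (Sum.inr p))` is `b_{p+1}`,
`Sum.inl (Sum.inr ())` is `c`, and `Sum.inr q` is `γ_{q+1}`. -/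
abbrev CVar (d n : ℕ) : Type := ((Fin d ⊕ Fin d) ⊕ Unit) ⊕ Fin n

/-- `a_m` in the target ring, with the conventions `a_0 = 0` and `a_{d+1} = 1`. -/
noncomputable def aT (k : Type) [CommRing k] (d n : ℕ) (m : ℕ) :
    MvPolynomial (CVar d n) k :=
  if h : 1 ≤ m ∧ m ≤ d then X (Sum.inl (Sum.inl (Sum.inl (⟨m - 1, by omega⟩ : Fin d))))
  else if m = d + 1 then 1 else 0

/-- `b_m` in the target ring, with the conventions `b_0 = 0` and `b_{d+1} = 0`. -/
noncomputable def bT (k : Type) [CommRing k] (d n : ℕ) (m : ℕ) :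
    MvPolynomial (CVar d n) k :=
  if h : 1 ≤ m ∧ m ≤ d then X (Sum.inl (Sum.inl (Sum.inr (⟨m - 1, by omega⟩ : Fin d))))
  else 0

/-- The algebra map `F : k[a_1,…,a_{d+1},b_1,…,b_{d+1},γ_1,…,γ_n] → k[a,b,c,γ]`,
`a_i ↦ a_{i-1} - c·a_i`, `b_i ↦ b_{i-1} - c·b_i` (with `a_0 = b_0 = b_{d+1} = 0`,
`a_{d+1} = 1`), `γ_j ↦ γ_j`. -/
noncomputable def Fmap (k : Type) [CommRing k] (d n : ℕ) :
    MvPolynomial (WVar (d + 1) n) k →ₐ[k] MvPolynomial (CVar d n) k :=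
  aeval (fun v => match v with
    | Sum.inl (Sum.inl p) =>
        aT k d n p - X (Sum.inl (Sum.inr ())) * aT k d n ((p : ℕ) + 1)
    | Sum.inl (Sum.inr p) =>
        bT k d n p - X (Sum.inl (Sum.inr ())) * bT k d n ((p : ℕ) + 1)
    | Sum.inr q => X (Sum.inr q))

/-- The inclusion of `k[a_1,…,a_d,b_1,…,b_d,γ_1,…,γ_n]` into
`k[a_1,…,a_d,b_1,…,b_d,c,γ_1,…,γ_n]`. -/
def embW (d n : ℕ) : WVar d n → CVar d n
  | Sum.inl x => Sum.inl (Sum.inl x)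
  | Sum.inr q => Sum.inr q


section AuxStatement0

variable (k : Type) [CommRing k] (d n : ℕ)

/-- The variable `c` in the target ring. -/
noncomputable def cP : MvPolynomial (CVar d n) k := X (Sum.inl (Sum.inr ()))

/-- The inclusion `k[a_1,…,a_d] → k[a,b,c,γ]`. -/
noncomputable def Hmap : MvPolynomial (Fin d) k →ₐ[k] MvPolynomial (CVar d n) k :=
  (rename (embW d n)).comp (rename (fun m => Sum.inl (Sum.inl m)))

/-- `F` restricted to `k[a_1,…,a_{d+1}]`. -/
noncomputable def Gmap : MvPolynomial (Fin (d+1)) k →ₐ[k] MvPolynomial (CVar d n) k :=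
  (Fmap k d n).comp (rename (fun m => Sum.inl (Sum.inl m)))

/-- `v_{t,d}` in the target ring. -/
noncomputable def wT (t : ℕ) : MvPolynomial (CVar d n) k := Hmap k d n (vcoef k d t)

/-- `F(v_{t,d+1}) = Σ_{s≤t} c^s v_{t-s,d}` in the target ring. -/
noncomputable def uT (t : ℕ) : MvPolynomial (CVar d n) k :=
  ∑ s ∈ Finset.range (t + 1), cP k d n ^ s * wT k d n (t - s)

lemma aT_var (m : ℕ) (h1 : 1 ≤ m) (h2 : m ≤ d) :
    aT k d n m = X (Sum.inl (Sum.inl (Sum.inl (⟨m - 1, by omega⟩ : Fin d)))) :=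
  dif_pos ⟨h1, h2⟩

lemma aT_zero : aT k d n 0 = 0 := by
  rw [aT, dif_neg (by omega), if_neg (by omega)]

lemma aT_top : aT k d n (d + 1) = 1 := by
  rw [aT, dif_neg (by omega), if_pos rfl]

lemma aT_big (m : ℕ) (h : d + 2 ≤ m) : aT k d n m = 0 := by
  rw [aT, dif_neg (by omega), if_neg (by omega)]

lemma bT_var (m : ℕ) (h1 : 1 ≤ m) (h2 : m ≤ d) :
    bT k d n m = X (Sum.inl (Sum.inl (Sum.inr (⟨m - 1, by omega⟩ : Fin d)))) :=
  dif_pos ⟨h1, h2⟩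

lemma bT_zero : bT k d n 0 = 0 := dif_neg (by omega)

lemma bT_top : bT k d n (d + 1) = 0 := dif_neg (by omega)

lemma Hmap_X (m : Fin d) :
    Hmap k d n (X m) = X (Sum.inl (Sum.inl (Sum.inl m))) := by
  simp [Hmap, embW]

lemma Gmap_X (m : Fin (d + 1)) :
    Gmap k d n (X m) = aT k d n m - cP k d n * aT k d n ((m : ℕ) + 1) := by
  simp [Gmap, Fmap, cP]

lemma coeff_Pser (D i : ℕ) : (PowerSeries.coeff (R := MvPolynomial (Fin D) k) i) (Pser k D) =
    (if i = 0 then 1 else 0) + ∑ m : Fin D, if i = D - (m : ℕ) then X m else 0 := by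
  simp [Pser, PowerSeries.coeff_one, PowerSeries.coeff_monomial]

lemma constPser (D : ℕ) :
    PowerSeries.constantCoeff (R := MvPolynomial (Fin D) k) (Pser k D) = 1 := by
  rw [← PowerSeries.coeff_zero_eq_constantCoeff_apply, coeff_Pser, if_pos rfl,
    Finset.sum_eq_zero, add_zero]
  intro m _
  exact if_neg (by have := m.isLt; omega)

lemma Hmap_coeff (i : ℕ) :
    Hmap k d n ((PowerSeries.coeff i) (Pser k d)) = aT k d n (d + 1 - i) := by
  rw [coeff_Pser, map_add, map_sum]
  simp only [apply_ite (Hmap k d n), map_zero, map_one, Hmap_X]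
  rcases Nat.eq_zero_or_pos i with h0 | h0
  · subst h0
    rw [if_pos rfl, Finset.sum_eq_zero (fun m _ => if_neg (by have := m.isLt; omega)),
      add_zero, Nat.sub_zero, aT_top]
  rw [if_neg (by omega), zero_add]
  by_cases hd : i ≤ d
  · rw [Finset.sum_eq_single (⟨d - i, by omega⟩ : Fin d)]
    · rw [if_pos (by simp only [Fin.val_mk]; omega),
        aT_var k d n _ (by omega) (by omega)]
      congr 1
      congr 1
      congr 1
      congr 1
      exact Fin.ext (by simp only [Fin.val_mk]; omega)
    · intro m _ hm
      refine if_neg fun h => hm (Fin.ext ?_)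
      have := m.isLt; simp only [Fin.val_mk]; omega
    · intro h; exact absurd (Finset.mem_univ _) h
  · rw [Finset.sum_eq_zero (fun m _ => if_neg (by have := m.isLt; omega)),
      aT, dif_neg (by omega), if_neg (by omega)]

lemma Gmap_coeff (i : ℕ) :
    Gmap k d n ((PowerSeries.coeff i) (Pser k (d + 1))) =
      aT k d n (d + 1 - i) - cP k d n * aT k d n (d + 2 - i) := by
  rw [coeff_Pser, map_add, map_sum]
  simp only [apply_ite (Gmap k d n), map_zero, map_one, Gmap_X]
  rcases Nat.eq_zero_or_pos i with h0 | h0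
  · subst h0
    rw [if_pos rfl, Finset.sum_eq_zero (fun m _ => if_neg (by have := m.isLt; omega)),
      add_zero, Nat.sub_zero, Nat.sub_zero, aT_top, aT_big k d n _ (by omega)]
    ring
  rw [if_neg (by omega), zero_add]
  by_cases hd : i ≤ d + 1
  · rw [Finset.sum_eq_single (⟨d + 1 - i, by omega⟩ : Fin (d + 1))]
    · rw [if_pos (show i = d + 1 - ((⟨d + 1 - i, by omega⟩ : Fin (d+1)) : ℕ) by
          simp only [Fin.val_mk]; omega)]
      simp only [Fin.val_mk]
      rw [show d + 1 - i + 1 = d + 2 - i by omega]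
    · intro m _ hm
      refine if_neg fun h => hm (Fin.ext ?_)
      have := m.isLt; simp only [Fin.val_mk]; omega
    · intro h; exact absurd (Finset.mem_univ _) h
  · rw [Finset.sum_eq_zero (fun m _ => if_neg (by have := m.isLt; omega)),
      show d + 1 - i = 0 by omega, show d + 2 - i = 0 by omega, aT_zero]
    ring

lemma mapG_Pser :
    PowerSeries.map (Gmap k d n).toRingHom (Pser k (d + 1)) =
      (1 - PowerSeries.C (cP k d n) * PowerSeries.X) *
        PowerSeries.map (Hmap k d n).toRingHom (Pser k d) := by
  refine PowerSeries.ext fun i => ?_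
  rw [PowerSeries.coeff_map, sub_mul, one_mul, mul_assoc, map_sub,
    PowerSeries.coeff_C_mul]
  show Gmap k d n _ = _
  rw [Gmap_coeff]
  cases i with
  | zero =>
      rw [PowerSeries.coeff_zero_X_mul, PowerSeries.coeff_map, mul_zero]
      show _ = Hmap k d n _ - 0
      rw [Hmap_coeff, aT_big k d n (d + 2 - 0) (by omega), mul_zero]
  | succ t =>
      rw [PowerSeries.coeff_succ_X_mul, PowerSeries.coeff_map, PowerSeries.coeff_map]
      show _ = Hmap k d n _ - cP k d n * Hmap k d n _
      rw [Hmap_coeff, Hmap_coeff, show d + 2 - (t + 1) = d + 1 - t by omega]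

lemma geom_mul :
    (1 - PowerSeries.C (cP k d n) * PowerSeries.X) *
      PowerSeries.mk (fun j => cP k d n ^ j) = 1 := by
  refine PowerSeries.ext fun i => ?_
  rw [sub_mul, one_mul, mul_assoc, map_sub, PowerSeries.coeff_C_mul]
  cases i with
  | zero =>
      rw [PowerSeries.coeff_zero_X_mul, PowerSeries.coeff_mk, mul_zero, sub_zero,
        pow_zero, PowerSeries.coeff_one, if_pos rfl]
  | succ t =>
      rw [PowerSeries.coeff_succ_X_mul, PowerSeries.coeff_mk, PowerSeries.coeff_mk,
        PowerSeries.coeff_one, if_neg t.succ_ne_zero, pow_succ]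
      ring

lemma mapG_inv :
    PowerSeries.map (Gmap k d n).toRingHom ((Pser k (d + 1)).invOfUnit 1) =
      PowerSeries.mk (fun j => cP k d n ^ j) *
        PowerSeries.map (Hmap k d n).toRingHom ((Pser k d).invOfUnit 1) := by
  set G := PowerSeries.map (Gmap k d n).toRingHom ((Pser k (d + 1)).invOfUnit 1) with hG
  set Rt := PowerSeries.mk (fun j => cP k d n ^ j) *
        PowerSeries.map (Hmap k d n).toRingHom ((Pser k d).invOfUnit 1) with hR
  have h1 : PowerSeries.map (Gmap k d n).toRingHom (Pser k (d + 1)) * G = 1 := by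
    rw [hG, ← map_mul, PowerSeries.mul_invOfUnit _ _ (by rw [constPser]; rfl), map_one]
  have hH : PowerSeries.map (Hmap k d n).toRingHom (Pser k d) *
      PowerSeries.map (Hmap k d n).toRingHom ((Pser k d).invOfUnit 1) = 1 := by
    rw [← map_mul, PowerSeries.mul_invOfUnit _ _ (by rw [constPser]; rfl), map_one]
  have h2 : PowerSeries.map (Gmap k d n).toRingHom (Pser k (d + 1)) * Rt = 1 := by
    rw [mapG_Pser, hR, mul_mul_mul_comm, geom_mul, hH, one_mul]
  calc G = G * (PowerSeries.map (Gmap k d n).toRingHom (Pser k (d + 1)) * Rt) := by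
          rw [h2, mul_one]
    _ = (PowerSeries.map (Gmap k d n).toRingHom (Pser k (d + 1)) * G) * Rt := by ring
    _ = Rt := by rw [h1, one_mul]

lemma Fmap_va (i : ℕ) : Fmap k d n (va k (d + 1) n i) = uT k d n i := by
  have h1 : Fmap k d n (va k (d + 1) n i) = Gmap k d n (vcoef k (d + 1) i) := by
    rw [va, Gmap, AlgHom.comp_apply]
  have h2 := congrArg (PowerSeries.coeff (R := MvPolynomial (CVar d n) k) i) (mapG_inv k d n)
  rw [PowerSeries.coeff_map, PowerSeries.coeff_mul,
    Finset.Nat.sum_antidiagonal_eq_sum_range_succ_mk] at h2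
  rw [h1, vcoef]
  refine h2.trans ?_
  rw [uT]
  refine Finset.sum_congr rfl fun s _ => ?_
  rw [PowerSeries.coeff_mk, PowerSeries.coeff_map]
  rfl

lemma rename_va (t : ℕ) : rename (embW d n) (va k d n t) = wT k d n t := by
  rw [wT, Hmap, AlgHom.comp_apply, va]

lemma uT_zero : uT k d n 0 = wT k d n 0 := by simp [uT]

lemma uT_succ (t : ℕ) : uT k d n (t + 1) = wT k d n (t + 1) + cP k d n * uT k d n t := by
  rw [uT, uT, Finset.sum_range_succ', Finset.mul_sum, add_comm]
  congr 1
  · simp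
  · refine Finset.sum_congr rfl fun s _ => ?_
    rw [show t + 1 - (s + 1) = t - s by omega, pow_succ]
    ring

lemma Fmap_gamW (i : ℕ) :
    Fmap k d n (gamW k (d + 1) n i) = rename (embW d n) (gamW k d n i) := by
  by_cases h : i < n
  · rw [gamW, gamW, dif_pos h, dif_pos h]
    simp [Fmap, embW]
  · rw [gamW, gamW, dif_neg h, dif_neg h, map_one, map_one]

lemma innerSumW (i : ℕ) :
    (∑ m : Fin (d + 1), if d - (m : ℕ) ≤ i then
        (bT k d n m - cP k d n * bT k d n ((m : ℕ) + 1)) * uT k d n (i - (d - (m : ℕ))) else 0)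
    = ∑ j : Fin d, if d - 1 - (j : ℕ) ≤ i then
        bT k d n ((j : ℕ) + 1) * wT k d n (i - (d - 1 - (j : ℕ))) else 0 := by
  rw [Fin.sum_univ_eq_sum_range (fun m => if d - m ≤ i then
      (bT k d n m - cP k d n * bT k d n (m + 1)) * uT k d n (i - (d - m)) else 0) (d + 1)]
  rw [Fin.sum_univ_eq_sum_range (fun j => if d - 1 - j ≤ i then
      bT k d n (j + 1) * wT k d n (i - (d - 1 - j)) else 0) d]
  have split : ∀ m, (if d - m ≤ i then
        (bT k d n m - cP k d n * bT k d n (m + 1)) * uT k d n (i - (d - m)) else 0)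
      = (if d - m ≤ i then bT k d n m * uT k d n (i - (d - m)) else 0)
        - (if d - m ≤ i then cP k d n * bT k d n (m + 1) * uT k d n (i - (d - m)) else 0) := by
    intro m
    by_cases h : d - m ≤ i
    · rw [if_pos h, if_pos h, if_pos h]; ring
    · rw [if_neg h, if_neg h, if_neg h, sub_zero]
  rw [Finset.sum_congr rfl (fun m _ => split m), Finset.sum_sub_distrib,
    Finset.sum_range_succ', Finset.sum_range_succ, bT_zero, bT_top]
  simp only [zero_mul, mul_zero, ite_self, add_zero]
  rw [← Finset.sum_sub_distrib]
  refine Finset.sum_congr rfl fun j hj => ?_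
  rw [Finset.mem_range] at hj
  rw [show d - (j + 1) = d - 1 - j by omega]
  by_cases h1 : d - 1 - j ≤ i
  · rw [if_pos h1, if_pos h1]
    by_cases h2 : d - j ≤ i
    · rw [if_pos h2, show i - (d - 1 - j) = (i - (d - j)) + 1 by omega, uT_succ]
      ring
    · rw [if_neg h2, sub_zero, show i - (d - 1 - j) = 0 by omega, uT_zero]
  · rw [if_neg h1, if_neg h1, if_neg (by omega), sub_zero]

end AuxStatement0

/-- `F(W_{d+1,n}) = W_{d,n}`, the latter viewed in the target ring. -/
theorem statement0 (k : Type) [CommRing k] (d n : ℕ) :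
    Fmap k d n (Wpoly k (d + 1) n) = rename (embW d n) (Wpoly k d n) := by
  simp only [Wpoly]
  rw [map_sum, map_sum]
  refine Finset.sum_congr rfl fun i _ => ?_
  rw [map_mul, map_mul, Fmap_gamW]
  congr 1
  rw [map_sum, map_sum]
  have LHSterm : ∀ m : Fin (d + 1),
      Fmap k d n (if d + 1 - 1 - (m : ℕ) ≤ i then
          X (Sum.inl (Sum.inr m)) * va k (d + 1) n (i - (d + 1 - 1 - (m : ℕ))) else 0)
      = if d - (m : ℕ) ≤ i then
          (bT k d n m - cP k d n * bT k d n ((m : ℕ) + 1)) * uT k d n (i - (d - (m : ℕ)))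
        else 0 := by
    intro m
    rw [show d + 1 - 1 - (m : ℕ) = d - (m : ℕ) by omega]
    by_cases h : d - (m : ℕ) ≤ i
    · rw [if_pos h, if_pos h, map_mul, Fmap_va]
      congr 1
      simp [Fmap, cP]
    · rw [if_neg h, if_neg h, map_zero]
  have RHSterm : ∀ j : Fin d,
      rename (embW d n) (if d - 1 - (j : ℕ) ≤ i then
          X (Sum.inl (Sum.inr j)) * va k d n (i - (d - 1 - (j : ℕ))) else 0)
      = if d - 1 - (j : ℕ) ≤ i then
          bT k d n ((j : ℕ) + 1) * wT k d n (i - (d - 1 - (j : ℕ))) else 0 := by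
    intro j
    by_cases h : d - 1 - (j : ℕ) ≤ i
    · rw [if_pos h, if_pos h, map_mul, rename_va]
      congr 1
      rw [rename_X, bT_var k d n _ (by omega) (by have := j.isLt; omega)]
      congr 1
    · rw [if_neg h, if_neg h, map_zero]
  rw [Finset.sum_congr rfl (fun m _ => LHSterm m),
    Finset.sum_congr rfl (fun j _ => RHSterm j)]
  exact innerSumW k d n i
end

section
/- Let k be a commutative ring and d > n ≥ 0. Then W_{d,n} = b_d·(γ_1 + Σ_{i=1}^n γ_{i+1} v_{i,d}) + b_{d−1}·(γ_2 + Σ_{i=2}^n γ_{i+1} v_{i−1,d}) + ⋯ + b_{d−n+1}·(γ_n + v_{1,d}) + b_{d−n}; that is, W_{d,n} = b_{d−n} + Σ_{r=1}^{n} b_{d−r+1}·(γ_r + Σ_{i=r}^n γ_{i+1} v_{i−r+1,d}). In particular the variable b_{d−n} occurs in W_{d,n} with coefficient exactly 1. -/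
open MvPolynomial

lemma va_zero (k : Type) [CommRing k] (d n : ℕ) : va k d n 0 = 1 := by
  have h : vcoef k d 0 = 1 := by
    rw [vcoef, PowerSeries.coeff_zero_eq_constantCoeff,
      PowerSeries.constantCoeff_invOfUnit]
    simp
  rw [va, h, map_one]

lemma innerSumW_s1 (k : Type) [CommRing k] (d n : ℕ) (hdn : n < d) (i : ℕ) (hi : i ≤ n) :
    (∑ j : Fin d,
      if d - 1 - (j : ℕ) ≤ i then
        X (σ := WVar d n) (R := k) (Sum.inl (Sum.inr j)) * va k d n (i - (d - 1 - (j : ℕ)))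
      else 0) =
    ∑ r ∈ Finset.range (i + 1),
      X (Sum.inl (Sum.inr (⟨d - 1 - r, by omega⟩ : Fin d))) * va k d n (i - r) := by
  have hd0 : 0 < d := lt_of_le_of_lt (Nat.zero_le n) hdn
  set f : ℕ → MvPolynomial (WVar d n) k := fun r =>
    if r ≤ i then
      X (Sum.inl (Sum.inr (⟨d - 1 - r, by omega⟩ : Fin d))) * va k d n (i - r)
    else 0 with hf
  have hstep1 : ∀ j : Fin d,
      (if d - 1 - (j : ℕ) ≤ i then
        X (σ := WVar d n) (R := k) (Sum.inl (Sum.inr j)) * va k d n (i - (d - 1 - (j : ℕ)))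
      else 0) = f ((Fin.revPerm j : Fin d) : ℕ) := by
    intro j
    have hj : (j : ℕ) < d := j.isLt
    have hval : ((Fin.revPerm j : Fin d) : ℕ) = d - 1 - (j : ℕ) := by
      simp [Fin.val_rev]; omega
    have h2 : d - 1 - (d - 1 - (j : ℕ)) = (j : ℕ) := by omega
    simp only [hf, hval, h2, Fin.eta]
  calc (∑ j : Fin d,
      if d - 1 - (j : ℕ) ≤ i then
        X (σ := WVar d n) (R := k) (Sum.inl (Sum.inr j)) * va k d n (i - (d - 1 - (j : ℕ)))
      else 0)
      = ∑ j : Fin d, f ((Fin.revPerm j : Fin d) : ℕ) :=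
        Finset.sum_congr rfl fun j _ => hstep1 j
    _ = ∑ j : Fin d, f (j : ℕ) := Equiv.sum_comp Fin.revPerm fun j : Fin d => f (j : ℕ)
    _ = ∑ r ∈ Finset.range d, f r := Fin.sum_univ_eq_sum_range f d
    _ = ∑ r ∈ Finset.range (i + 1),
          X (Sum.inl (Sum.inr (⟨d - 1 - r, by omega⟩ : Fin d))) * va k d n (i - r) := by
        simp only [hf]
        rw [← Finset.sum_filter]
        congr 1
        ext r
        simp only [Finset.mem_filter, Finset.mem_range]
        omega

/-- for `d > n ≥ 0`,
`W_{d,n} = b_{d-n} + ∑_{r=1}^{n} b_{d-r+1}·(γ_r + ∑_{i=r}^n γ_{i+1} v_{i-r+1,d})`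
(the sum below is indexed by `r' = r - 1 ∈ {0,…,n-1}`). -/
theorem statement1 (k : Type) [CommRing k] (d n : ℕ) (hdn : n < d) :
    Wpoly k d n =
      X (Sum.inl (Sum.inr (⟨d - n - 1, by omega⟩ : Fin d))) +
      ∑ r ∈ Finset.range n,
        X (Sum.inl (Sum.inr (⟨d - r - 1, by omega⟩ : Fin d))) *
          (gamW k d n r +
            ∑ i ∈ Finset.Icc (r + 1) n, gamW k d n i * va k d n (i - r)) := by
  have M : Wpoly k d n =
      ∑ r ∈ Finset.range (n + 1),
        X (Sum.inl (Sum.inr (⟨d - 1 - r, by omega⟩ : Fin d))) *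
          ∑ i ∈ Finset.Icc r n, gamW k d n i * va k d n (i - r) := by
    rw [Wpoly]
    rw [Finset.sum_congr rfl (fun i hi => by
      rw [innerSumW_s1 k d n hdn i (Finset.mem_range_succ_iff.mp hi)])]
    have step : ∀ i ∈ Finset.range (n + 1),
        gamW k d n i * ∑ r ∈ Finset.range (i + 1),
          X (σ := WVar d n) (R := k) (Sum.inl (Sum.inr (⟨d - 1 - r, by omega⟩ : Fin d))) *
            va k d n (i - r) =
        ∑ r ∈ Finset.range (n + 1),
          if r ≤ i then
            X (Sum.inl (Sum.inr (⟨d - 1 - r, by omega⟩ : Fin d))) *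
              (gamW k d n i * va k d n (i - r))
          else 0 := by
      intro i hi
      rw [Finset.mul_sum, ← Finset.sum_filter]
      have : Finset.filter (fun r => r ≤ i) (Finset.range (n + 1)) = Finset.range (i + 1) := by
        ext r
        simp only [Finset.mem_filter, Finset.mem_range]
        simp only [Finset.mem_range] at hi
        omega
      rw [this]
      exact Finset.sum_congr rfl fun r _ => by ring
    rw [Finset.sum_congr rfl step, Finset.sum_comm]
    refine Finset.sum_congr rfl fun r hr => ?_
    rw [← Finset.sum_filter]
    have : Finset.filter (fun i => r ≤ i) (Finset.range (n + 1)) = Finset.Icc r n := by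
      ext i
      simp only [Finset.mem_filter, Finset.mem_range, Finset.mem_Icc]
      omega
    rw [this, Finset.mul_sum]
  rw [M, Finset.sum_range_succ]
  have hnn : (∑ i ∈ Finset.Icc n n, gamW k d n i * va k d n (i - n)) = 1 := by
    rw [Finset.Icc_self, Finset.sum_singleton, Nat.sub_self, va_zero, gamW]
    simp
  have e1 : (⟨d - 1 - n, by omega⟩ : Fin d) = ⟨d - n - 1, by omega⟩ :=
    Fin.ext (show d - 1 - n = d - n - 1 by omega)
  rw [hnn, mul_one, add_comm, e1]
  congr 1
  refine Finset.sum_congr rfl fun r hr => ?_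
  have hr' : r < n := Finset.mem_range.mp hr
  have e2 : (⟨d - 1 - r, by omega⟩ : Fin d) = ⟨d - r - 1, by omega⟩ :=
    Fin.ext (show d - 1 - r = d - r - 1 by omega)
  have hIcc : Finset.Icc r n = insert r (Finset.Icc (r + 1) n) := by
    rw [Finset.Icc_add_one_left_eq_Ioc, Finset.Ioc_insert_left (by omega : r ≤ n)]
  rw [e2, hIcc, Finset.sum_insert (by simp), Nat.sub_self, va_zero, mul_one]
end
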